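/- arXiv:1201.3987 — 2 statements merged into one kernel-verified Lean document; each statement's English description precedes it below -/
import Mathlib

section
/- In a dendroidally ordered set A, every edge a other than the root is a child of a unique edge x ∈ A (its parent), i.e., a occurs in x↑ for exactly one x. -/
/-- A (commutative) broad poset: a set `A` with a relation between the free
commutative monoid on `A` (modelled as `Multiset A`) and `A`, satisfying
broad reflexivity, transitivity and antisymmetry. -/
structure BroadPoset (A : Type) where
  le : Multiset A → A → Prop
  le_refl : ∀ a : A, le {a} a
  le_trans : ∀ (a : A) (l : List (Multiset A × A)),
      le (↑(l.map Prod.snd) : Multiset A) a → (∀ p ∈ l, le p.1 p.2) →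
      le (l.map Prod.fst).sum a
  le_antisymm : ∀ a a' : A, le {a} a' → le {a'} a → a = a'

/-- The descendance relation: `b ≤_d a` iff `b` occurs in some `b' ≤ a`. -/
def BroadPoset.descLe {A : Type} (P : BroadPoset A) (b a : A) : Prop :=
  ∃ b' : Multiset A, P.le b' a ∧ b ∈ b'

/-- Strict broad inequality `b < a`. -/
def BroadPoset.blt {A : Type} (P : BroadPoset A) (b : Multiset A) (a : A) : Prop :=
  P.le b a ∧ b ≠ {a}

/-- The induced order on `A⁺`: `s ≤ t` iff `t = t₁·…·tₙ` and `s = s₁·…·sₙ`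
with `sᵢ ≤ tᵢ` for each `i`. -/
def BroadPoset.multLe {A : Type} (P : BroadPoset A) (s t : Multiset A) : Prop :=
  ∃ l : List (Multiset A × A), (↑(l.map Prod.snd) : Multiset A) = t ∧
    (l.map Prod.fst).sum = s ∧ ∀ p ∈ l, P.le p.1 p.2

/-- A leaf: an element with `ĥa = ∅`. -/
def BroadPoset.IsLeaf {A : Type} (P : BroadPoset A) (a : A) : Prop :=
  ∀ b : Multiset A, ¬ P.blt b a

/-- `u` is the maximum of `ĥa = {b | b < a}`, i.e. `u = a↑`; its members are
the children of `a`. -/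
def BroadPoset.IsChildSet {A : Type} (P : BroadPoset A) (a : A) (u : Multiset A) : Prop :=
  P.blt u a ∧ ∀ b : Multiset A, P.blt b a → P.multLe b u

/-- `r` is the root: every element is a descendant of `r` (extremum of `≤_d`). -/
def BroadPoset.IsRoot {A : Type} (P : BroadPoset A) (r : A) : Prop :=
  ∀ a : A, P.descLe a r

/-- Monotone functions between broad posets. -/
def IsMonotone {A B : Type} (P : BroadPoset A) (Q : BroadPoset B) (f : A → B) : Prop :=
  ∀ (b : Multiset A) (a : A), P.le b a → Q.le (b.map f) (f a)

/-- A link: `b < a` such that `b ≤ b' < a` implies `b = b'`. -/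
def BroadPoset.IsLink {A : Type} (P : BroadPoset A) (b : Multiset A) (a : A) : Prop :=
  P.blt b a ∧ ∀ b' : Multiset A, P.multLe b b' → P.blt b' a → b = b'

/-- A dendroidally ordered set: a finite broad poset which is simple, has a
root, and in which every non-leaf has children. -/
structure BroadPoset.IsDendroidal {A : Type} (P : BroadPoset A) : Prop where
  finite : Set.Finite {p : Multiset A × A | P.le p.1 p.2}
  simple : ∀ (b : Multiset A) (a : A), P.le b a → b.Nodup
  root : ∃ r : A, P.IsRoot r
  children : ∀ a : A, ¬ P.IsLeaf a → ∃ u : Multiset A, P.IsChildSet a u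


namespace BroadPoset

variable {A : Type} [DecidableEq A] (P : BroadPoset A)

lemma mem_list_sum {a : A} {L : List (Multiset A)} (h : a ∈ L.sum) : ∃ m ∈ L, a ∈ m := by
  induction L with
  | nil => simp at h
  | cons m t ih =>
    rw [List.sum_cons, Multiset.mem_add] at h
    rcases h with h | h
    · exact ⟨m, List.mem_cons_self, h⟩
    · obtain ⟨m', hm', ha⟩ := ih h
      exact ⟨m', List.mem_cons_of_mem _ hm', ha⟩

lemma sum_map_singleton (L : List A) :
    (L.map (fun z => ({z} : Multiset A))).sum = (↑L : Multiset A) := by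
  induction L with
  | nil => simp
  | cons z t ih => simp [ih, Multiset.singleton_add]

/-- Substitution: replace one element of `s` by something below it. -/
lemma le_subst {s b : Multiset A} {c x : A} (hs : P.le s x) (hc : c ∈ s) (hb : P.le b c) :
    P.le (b + s.erase c) x := by
  have hL : (↑(s.erase c).toList : Multiset A) = s.erase c := Multiset.coe_toList _
  set L := (s.erase c).toList with hLdef
  have h1 : (↑((((b, c) :: L.map (fun z => (({z} : Multiset A), z))).map Prod.snd)) : Multiset A)
      = s := by
    simp only [List.map_cons, List.map_map]
    have he : (Prod.snd ∘ fun z : A => (({z} : Multiset A), z)) = id := rfl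
    rw [he, List.map_id]
    rw [show ((↑(c :: L) : Multiset A)) = c ::ₘ ↑L from rfl, hL, Multiset.cons_erase hc]
  have h2 : ∀ p ∈ ((b, c) :: L.map (fun z => (({z} : Multiset A), z))), P.le p.1 p.2 := by
    intro p hp
    rcases List.mem_cons.1 hp with rfl | hp
    · exact hb
    · obtain ⟨z, _, rfl⟩ := List.mem_map.1 hp
      exact P.le_refl z
  have h3 : (((b, c) :: L.map (fun z => (({z} : Multiset A), z))).map Prod.fst).sum
      = b + s.erase c := by
    simp only [List.map_cons, List.map_map, List.sum_cons]
    have he : (Prod.fst ∘ fun z : A => (({z} : Multiset A), z))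
        = (fun z : A => ({z} : Multiset A)) := rfl
    rw [he, sum_map_singleton, hL]
  rw [← h3]
  exact P.le_trans x _ (h1 ▸ hs) h2

lemma descLe_refl (a : A) : P.descLe a a := ⟨{a}, P.le_refl a, by simp⟩

lemma descLe_trans {a b c : A} (h1 : P.descLe a b) (h2 : P.descLe b c) : P.descLe a c := by
  obtain ⟨s, hs, has⟩ := h1
  obtain ⟨t, ht, hbt⟩ := h2
  exact ⟨s + t.erase b, P.le_subst ht hbt hs, Multiset.mem_add.2 (Or.inl has)⟩

/-- If `b < x` then `x ∉ b` (uses finiteness). -/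
lemma not_mem_of_blt (hfin : Set.Finite {p : Multiset A × A | P.le p.1 p.2})
    {b : Multiset A} {x : A} (h : P.blt b x) : x ∉ b := by
  intro hxb
  obtain ⟨hle, hne⟩ := h
  have hcard : 2 ≤ Multiset.card b := by
    rcases Multiset.exists_cons_of_mem hxb with ⟨t, rfl⟩
    have : t ≠ 0 := by rintro rfl; simp at hne
    have := Multiset.card_pos.2 this
    simp only [Multiset.card_cons]
    omega
  set t := b.erase x with ht
  have htcard : 1 ≤ Multiset.card t := by
    have h5 : Multiset.card t + 1 = Multiset.card b := by
      rw [ht]; exact Multiset.card_erase_add_one hxb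
    omega
  have key : ∀ n : ℕ, P.le (b + n • t) x := by
    intro n
    induction n with
    | zero => simpa using hle
    | succ n ih =>
      have hx : x ∈ b + n • t := Multiset.mem_add.2 (Or.inl hxb)
      have := P.le_subst ih hx hle
      have heq : b + (b + n • t).erase x = b + (n + 1) • t := by
        have h4 : (b + n • t).erase x = t + n • t := by
          rw [ht, Multiset.erase_add_left_pos _ hxb, add_comm]
        rw [h4, succ_nsmul, add_comm (n • t) t]
      rwa [heq] at this
  have hinj : Function.Injective (fun n : ℕ => ((b + n • t, x) : Multiset A × A)) := by
    intro m n hmn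
    have := congrArg (fun p => Multiset.card p.1) hmn
    simp only [Multiset.card_add, Multiset.card_nsmul] at this
    have := htcard
    nlinarith
  exact Set.infinite_of_injective_forall_mem hinj (fun n => key n) hfin

lemma descLe_antisymm (hfin : Set.Finite {p : Multiset A × A | P.le p.1 p.2})
    {x y : A} (h1 : P.descLe x y) (h2 : P.descLe y x) : x = y := by
  obtain ⟨s, hs, hxs⟩ := h1
  obtain ⟨t, ht, hyt⟩ := h2
  have hd : P.le (s + t.erase y) x := P.le_subst ht hyt hs
  have hxd : x ∈ s + t.erase y := Multiset.mem_add.2 (Or.inl hxs)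
  by_cases hcase : s + t.erase y = {x}
  · have h1c : Multiset.card s + Multiset.card (t.erase y) = 1 := by
      have := congrArg Multiset.card hcase; simpa using this
    have hsp : 0 < Multiset.card s := Multiset.card_pos_iff_exists_mem.2 ⟨x, hxs⟩
    have htp : 0 < Multiset.card t := Multiset.card_pos_iff_exists_mem.2 ⟨y, hyt⟩
    have hce : Multiset.card (t.erase y) + 1 = Multiset.card t :=
      Multiset.card_erase_add_one hyt
    have hs1 : Multiset.card s = 1 := by omega
    have ht1 : Multiset.card t = 1 := by omega
    obtain ⟨z, rfl⟩ := Multiset.card_eq_one.1 hs1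
    obtain ⟨z', rfl⟩ := Multiset.card_eq_one.1 ht1
    obtain rfl : x = z := Multiset.mem_singleton.1 hxs
    obtain rfl : y = z' := Multiset.mem_singleton.1 hyt
    exact P.le_antisymm x y hs ht
  · exact absurd hxd (P.not_mem_of_blt hfin ⟨hd, hcase⟩)




/-- Decomposition: if `b ≤ w` (multiset order) and `a ∈ b`, then `a` lies in a
piece `s ≤ c` with `c ∈ w`. -/
lemma multLe_exists {b w : Multiset A} (h : P.multLe b w) {a : A} (ha : a ∈ b) :
    ∃ s c, a ∈ s ∧ P.le s c ∧ c ∈ w := by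
  obtain ⟨l, hsnd, hfst, hle⟩ := h
  rw [← hfst] at ha
  obtain ⟨m, hm, ham⟩ := mem_list_sum ha
  obtain ⟨p, hp, rfl⟩ := List.mem_map.1 hm
  refine ⟨p.1, p.2, ham, hle p hp, ?_⟩
  rw [← hsnd]
  exact Multiset.mem_coe.2 (List.mem_map_of_mem hp)

/-- Branch uniqueness: `a` cannot descend from two distinct members of a
multiset lying below `z` (by simplicity). -/
lemma branch_unique (hsimple : ∀ (b : Multiset A) (x : A), P.le b x → b.Nodup)
    {w : Multiset A} {z a c1 c2 : A} (hw : P.le w z)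
    (hc1 : c1 ∈ w) (hc2 : c2 ∈ w) (hne : c1 ≠ c2)
    (h1 : P.descLe a c1) (h2 : P.descLe a c2) : False := by
  obtain ⟨e1, he1, hae1⟩ := h1
  obtain ⟨e2, he2, hae2⟩ := h2
  have hw1 : P.le (e1 + w.erase c1) z := P.le_subst hw hc1 he1
  have hc2' : c2 ∈ e1 + w.erase c1 :=
    Multiset.mem_add.2 (Or.inr ((Multiset.mem_erase_of_ne (Ne.symm hne)).2 hc2))
  have hw2 : P.le (e2 + (e1 + w.erase c1).erase c2) z := P.le_subst hw1 hc2' he2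
  have hnd := hsimple _ _ hw2
  rw [Multiset.nodup_iff_count_le_one] at hnd
  have hcount := hnd a
  have k1 : 1 ≤ Multiset.count a e1 := Multiset.one_le_count_iff_mem.2 hae1
  have k2 : 1 ≤ Multiset.count a e2 := Multiset.one_le_count_iff_mem.2 hae2
  have kw1 : 1 ≤ Multiset.count c1 w := Multiset.one_le_count_iff_mem.2 hc1
  have kw2 : 1 ≤ Multiset.count c2 w := Multiset.one_le_count_iff_mem.2 hc2
  rw [Multiset.count_add] at hcount
  have hce : Multiset.count a (e1 + w.erase c1)
      = Multiset.count a e1 + Multiset.count a (w.erase c1) := Multiset.count_add _ _ _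
  by_cases ha2 : a = c2
  · subst ha2
    rw [Multiset.count_erase_self, hce] at hcount
    rw [Multiset.count_erase_of_ne (fun h => hne h.symm)] at hcount
    omega
  · rw [Multiset.count_erase_of_ne ha2, hce] at hcount
    by_cases ha1 : a = c1
    · subst ha1
      rw [Multiset.count_erase_self] at hcount
      omega
    · rw [Multiset.count_erase_of_ne ha1] at hcount
      omega

end BroadPoset

/-- In a dendroidally ordered set, every non-root edge is the child of a
unique edge, its parent. -/
theorem unique_parent {A : Type} (P : BroadPoset A) (hP : P.IsDendroidal)
    (r : A) (hr : P.IsRoot r) (a : A) (ha : a ≠ r) :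
    ∃! x : A, ∃ u : Multiset A, P.IsChildSet x u ∧ a ∈ u := by
  classical
  have hfin := hP.finite
  let D : Set A := {y | P.descLe a y}
  have hDfin : D.Finite := by
    apply Set.Finite.subset (hfin.image Prod.snd)
    rintro y ⟨b', hb', -⟩
    exact ⟨(b', y), hb', rfl⟩
  let rel : A → A → Prop := fun y z => P.descLe y z ∧ y ≠ z
  haveI : IsIrrefl A rel := ⟨fun x h => h.2 rfl⟩
  haveI : IsTrans A rel := ⟨fun x y z h1 h2 =>
    ⟨P.descLe_trans h1.1 h2.1,
     fun h => h2.2 (P.descLe_antisymm hfin h2.1 (h ▸ h1.1))⟩⟩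
  haveI : IsStrictOrder A rel := ⟨⟩
  have hWF : WellFounded (fun y z : D => rel y.1 z.1) := hDfin.wellFoundedOn (r := rel)
  -- existence
  have key1 : ∀ z : D, (∃ b, P.blt b z.1 ∧ a ∈ b) → ∃ x u, P.IsChildSet x u ∧ a ∈ u :=
    fun z => hWF.induction
      (C := fun z : D => (∃ b, P.blt b z.1 ∧ a ∈ b) → ∃ x u, P.IsChildSet x u ∧ a ∈ u)
      z (fun z ih hz => by
      obtain ⟨b, hbz, hab⟩ := hz
      have hnl : ¬ P.IsLeaf z.1 := fun h => h b hbz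
      obtain ⟨w, hw⟩ := hP.children z.1 hnl
      obtain ⟨s, c, has, hsc, hcw⟩ := P.multLe_exists (hw.2 b hbz) hab
      by_cases hs : s = {c}
      · rw [hs, Multiset.mem_singleton] at has
        exact ⟨z.1, w, hw, has ▸ hcw⟩
      · have hcD : P.descLe a c := ⟨s, hsc, has⟩
        have hcz : P.descLe c z.1 := ⟨w, hw.1.1, hcw⟩
        have hcne : c ≠ z.1 := fun h => (P.not_mem_of_blt hfin hw.1) (h ▸ hcw)
        exact ih ⟨c, hcD⟩ ⟨hcz, hcne⟩ ⟨s, ⟨hsc, hs⟩, has⟩)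
  -- descent step
  have step : ∀ (z : A) (w : Multiset A), P.IsChildSet z w → ∀ x' u',
      P.IsChildSet x' u' → a ∈ u' → P.descLe x' z → x' ≠ z →
      ∃ c, c ∈ w ∧ P.descLe a c ∧ P.descLe x' c := by
    intro z w hw x' u' hx' hau' hdz hne
    obtain ⟨d, hdz', hx'd⟩ := hdz
    have hdne : d ≠ ({z} : Multiset A) := fun h => hne (by
      rw [h] at hx'd; exact Multiset.mem_singleton.1 hx'd)
    obtain ⟨q1, c, hx'q1, hq, hcw⟩ := P.multLe_exists (hw.2 d ⟨hdz', hdne⟩) hx'd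
    have h1 : P.descLe x' c := ⟨q1, hq, hx'q1⟩
    exact ⟨c, hcw, P.descLe_trans ⟨u', hx'.1.1, hau'⟩ h1, h1⟩
  -- uniqueness
  have key2 : ∀ z : D, ∀ x u x' u', P.IsChildSet x u → a ∈ u → P.IsChildSet x' u' →
      a ∈ u' → P.descLe x z.1 → P.descLe x' z.1 → x = x' := by
    intro z
    refine hWF.induction
      (C := fun z : D => ∀ x u x' u', P.IsChildSet x u → a ∈ u → P.IsChildSet x' u' →
        a ∈ u' → P.descLe x z.1 → P.descLe x' z.1 → x = x') z ?_
    intro z ih x u x' u' hx hau hx' hau' hxz hx'z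
    by_cases hxeq : x = z.1
    · by_cases hx'eq : x' = z.1
      · rw [hxeq, hx'eq]
      · exfalso
        have hzu : P.IsChildSet z.1 u := hxeq ▸ hx
        obtain ⟨c, hcu, hac, hx'c⟩ := step z.1 u hzu x' u' hx' hau' hx'z hx'eq
        by_cases hac' : a = c
        · subst hac'
          have hxa : x' = a := P.descLe_antisymm hfin hx'c ⟨u', hx'.1.1, hau'⟩
          exact P.not_mem_of_blt hfin (hxa ▸ hx'.1) hau'
        · exact P.branch_unique hP.simple hzu.1.1 hau hcu hac' (P.descLe_refl a) hac
    · by_cases hx'eq : x' = z.1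
      · exfalso
        have hzu : P.IsChildSet z.1 u' := hx'eq ▸ hx'
        obtain ⟨c, hcu, hac, hxc⟩ := step z.1 u' hzu x u hx hau hxz hxeq
        by_cases hac' : a = c
        · subst hac'
          have hxa : x = a := P.descLe_antisymm hfin hxc ⟨u, hx.1.1, hau⟩
          exact P.not_mem_of_blt hfin (hxa ▸ hx.1) hau
        · exact P.branch_unique hP.simple hzu.1.1 hau' hcu hac' (P.descLe_refl a) hac
      · obtain ⟨d, hdz', hxd⟩ := hxz
        have hdne : d ≠ ({z.1} : Multiset A) := fun h => hxeq (by
          rw [h] at hxd; exact Multiset.mem_singleton.1 hxd)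
        have hnl : ¬ P.IsLeaf z.1 := fun h => h d ⟨hdz', hdne⟩
        obtain ⟨w, hw⟩ := hP.children z.1 hnl
        obtain ⟨c, hcw, hac, hxc⟩ := step z.1 w hw x u hx hau ⟨d, hdz', hxd⟩ hxeq
        obtain ⟨c', hc'w, hac', hx'c'⟩ := step z.1 w hw x' u' hx' hau' hx'z hx'eq
        by_cases hcc : c = c'
        · subst hcc
          have hcz : P.descLe c z.1 := ⟨w, hw.1.1, hcw⟩
          have hcne : c ≠ z.1 := fun h => (P.not_mem_of_blt hfin hw.1) (h ▸ hcw)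
          exact ih ⟨c, hac⟩ ⟨hcz, hcne⟩ x u x' u' hx hau hx' hau' hxc hx'c'
        · exact (P.branch_unique hP.simple hw.1.1 hcw hc'w hcc hac hac').elim
  obtain ⟨b, hbr, hab⟩ := hr a
  have hbne : b ≠ ({r} : Multiset A) := fun h => ha (by
    rw [h] at hab; exact Multiset.mem_singleton.1 hab)
  have hrD : P.descLe a r := ⟨b, hbr, hab⟩
  obtain ⟨x, u, hxu, hau⟩ := key1 ⟨r, hrD⟩ ⟨b, ⟨hbr, hbne⟩, hab⟩
  refine ⟨x, ⟨u, hxu, hau⟩, ?_⟩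
  rintro y ⟨v, hyv, hav⟩
  exact key2 ⟨r, hrD⟩ y v x u hyv hav hxu hau (hr y) (hr x)
end

section
/- If A is a dendroidally ordered set with root r and r↑ = a₁·…·aₙ, then A ∩-decomposes as A_root ∪ A_{a₁} ∪ ⋯ ∪ A_{aₙ}, with A_{aᵢ} ∩ A_root = {aᵢ} for each i, and every element of A not in A_root lies in exactly one A_{aᵢ}. -/
lemma singleton_map_sum {A : Type} (l : List A) :
    (l.map (fun x => ({x} : Multiset A))).sum = (l : Multiset A) := by
  induction l with
  | nil => rfl
  | cons a l ih => simp [ih, Multiset.singleton_add]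

lemma mem_list_sum {A : Type} {x : A} {l : List (Multiset A)} (h : x ∈ l.sum) :
    ∃ s ∈ l, x ∈ s := by
  induction l with
  | nil => simp at h
  | cons a l ih =>
    rw [List.sum_cons, Multiset.mem_add] at h
    rcases h with h | h
    · exact ⟨a, List.mem_cons_self, h⟩
    · obtain ⟨s, hs, hxs⟩ := ih h
      exact ⟨s, List.mem_cons_of_mem a hs, hxs⟩

lemma BroadPoset.le_compose {A : Type} (P : BroadPoset A) {u b t : Multiset A} {r i : A}
    (hu : P.le u r) (hb : P.le b i) (hsplit : u = i ::ₘ t) :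
    P.le (b + t) r := by
  have h := P.le_trans r ((b, i) :: t.toList.map (fun x => (({x} : Multiset A), x))) ?_ ?_
  · have e : ((((b, i) :: t.toList.map (fun x => (({x} : Multiset A), x))).map Prod.fst).sum)
        = b + t := by
      simp [List.map_map, Function.comp_def, singleton_map_sum]
    rwa [e] at h
  · have e : ((((b, i) :: t.toList.map (fun x => (({x} : Multiset A), x))).map Prod.snd : List A)
        : Multiset A) = u := by
      simp [List.map_map, Function.comp_def, hsplit, ← Multiset.cons_coe, Multiset.coe_toList]
    rw [e]; exact hu
  · rintro p hp
    rcases List.mem_cons.1 hp with h | h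
    · subst h; exact hb
    · rcases List.mem_map.1 h with ⟨x, _, rfl⟩; exact P.le_refl x

lemma BroadPoset.no_dup_branch {A : Type} (P : BroadPoset A)
    (hsimp : ∀ (b : Multiset A) (a : A), P.le b a → b.Nodup)
    {u b c t : Multiset A} {r i j x : A}
    (hu : P.le u r) (hij : u = i ::ₘ j ::ₘ t) (hb : P.le b i) (hc : P.le c j)
    (hxb : x ∈ b) (hxc : x ∈ c) : False := by
  have h1 : P.le (c + (i ::ₘ t)) r :=
    P.le_compose hu hc (by rw [hij, Multiset.cons_swap])
  have h2 : P.le (b + (c + t)) r :=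
    P.le_compose h1 hb (by rw [Multiset.add_cons])
  have hnd := hsimp _ _ h2
  rw [Multiset.nodup_add] at hnd
  exact Multiset.disjoint_left.1 hnd.2.2 hxb (Multiset.mem_add.2 (Or.inl hxc))

lemma BroadPoset.eq_singleton_of_self_mem {A : Type} (P : BroadPoset A)
    (hsimp : ∀ (b : Multiset A) (a : A), P.le b a → b.Nodup)
    {c : Multiset A} {r : A} (hc : P.le c r) (hrc : r ∈ c) : c = {r} := by
  obtain ⟨t, ht⟩ := Multiset.exists_cons_of_mem hrc
  have h2 : P.le (c + t) r := P.le_compose hc hc ht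
  have hnd := hsimp _ _ h2
  rw [Multiset.nodup_add] at hnd
  have ht0 : t = 0 := by
    by_contra h
    obtain ⟨x, hx⟩ := Multiset.exists_mem_of_ne_zero h
    exact Multiset.disjoint_left.1 hnd.2.2 (ht ▸ Multiset.mem_cons_of_mem hx) hx
  rw [ht, ht0]; rfl

/-- Fundamental decomposition: with root `r` and `r↑ = a₁·…·aₙ`, the set `A`
decomposes as `A_root ∪ A_{a₁} ∪ ⋯ ∪ A_{aₙ}`, with `A_{aᵢ} ∩ A_root = {aᵢ}`,
and every element outside `A_root` lies in exactly one `A_{aᵢ}`. -/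
theorem root_decomposition {A : Type} (P : BroadPoset A) (hP : P.IsDendroidal)
    (r : A) (hr : P.IsRoot r) (u : Multiset A) (hu : P.IsChildSet r u) :
    (∀ x : A, x ∈ (insert r {y : A | y ∈ u} : Set A) ∨ ∃ i, i ∈ u ∧ P.descLe x i) ∧
    (∀ i ∈ u, {x : A | P.descLe x i} ∩ (insert r {y : A | y ∈ u} : Set A) = {i}) ∧
    (∀ x : A, x ∉ (insert r {y : A | y ∈ u} : Set A) →
      ∃! i : A, i ∈ u ∧ P.descLe x i) := by
  obtain ⟨⟨hur, hune⟩, hmax⟩ := hu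
  have hsimp := hP.simple
  have part1 : ∀ x : A, x ∈ (insert r {y : A | y ∈ u} : Set A) ∨
      ∃ i, i ∈ u ∧ P.descLe x i := by
    intro x
    obtain ⟨b, hb, hxb⟩ := hr x
    by_cases hbr : b = {r}
    · left
      subst hbr
      simp only [Multiset.mem_singleton] at hxb
      subst hxb
      exact Set.mem_insert _ _
    · right
      obtain ⟨l, hsnd, hfst, hall⟩ := hmax b ⟨hb, hbr⟩
      rw [← hfst] at hxb
      obtain ⟨s, hs, hxs⟩ := mem_list_sum hxb
      obtain ⟨p, hp, rfl⟩ := List.mem_map.1 hs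
      refine ⟨p.2, ?_, p.1, hall p hp, hxs⟩
      rw [← hsnd, Multiset.mem_coe]
      exact List.mem_map.2 ⟨p, hp, rfl⟩
  have uniq : ∀ (i j x : A), i ∈ u → j ∈ u → i ≠ j →
      P.descLe x i → P.descLe x j → False := by
    intro i j x hi hj hij ⟨b, hbi, hxb⟩ ⟨c, hcj, hxc⟩
    obtain ⟨t₁, ht₁⟩ := Multiset.exists_cons_of_mem hi
    have hjt : j ∈ t₁ := by
      have := ht₁ ▸ hj
      rcases Multiset.mem_cons.1 this with h | h
      · exact absurd h.symm hij
      · exact h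
    obtain ⟨t₂, ht₂⟩ := Multiset.exists_cons_of_mem hjt
    exact P.no_dup_branch hsimp hur (by rw [ht₁, ht₂]) hbi hcj hxb hxc
  refine ⟨part1, ?_, ?_⟩
  · intro i hi
    ext x
    simp only [Set.mem_inter_iff, Set.mem_setOf_eq, Set.mem_insert_iff,
      Set.mem_singleton_iff]
    constructor
    · rintro ⟨hdesc, hx⟩
      rcases hx with rfl | hxu
      · -- x = r : derive contradiction
        exfalso
        obtain ⟨b, hbi, hrb⟩ := hdesc
        obtain ⟨u', hu'⟩ := Multiset.exists_cons_of_mem hi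
        have h2 : P.le (b + u') x := P.le_compose hur hbi hu'
        have heq : b + u' = {x} :=
          P.eq_singleton_of_self_mem hsimp h2 (Multiset.mem_add.2 (Or.inl hrb))
        have hcard := congrArg Multiset.card heq
        simp only [Multiset.card_add, Multiset.card_singleton] at hcard
        have hbpos : 0 < Multiset.card b := Multiset.card_pos_iff_exists_mem.2 ⟨x, hrb⟩
        have hu'0 : u' = 0 := Multiset.card_eq_zero.1 (by omega)
        rw [hu'0, add_zero] at heq
        rw [hu'0] at hu'
        have hui : u = {i} := by rw [hu']; rfl
        have hxi : x = i := P.le_antisymm x i (heq ▸ hbi) (hui ▸ hur)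
        exact hune (by rw [hu', ← hxi]; rfl)
      · by_contra hne
        exact uniq i x x hi hxu (fun h => hne h.symm) hdesc
          ⟨{x}, P.le_refl x, Multiset.mem_singleton_self x⟩
    · rintro rfl
      exact ⟨⟨{x}, P.le_refl x, Multiset.mem_singleton_self x⟩, Or.inr hi⟩
  · intro x hx
    rcases part1 x with h | ⟨i, hi, hd⟩
    · exact absurd h hx
    · refine ⟨i, ⟨hi, hd⟩, ?_⟩
      rintro j ⟨hj, hdj⟩
      by_contra hne
      exact uniq j i x hj hi hne hdj hd
end
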